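/- arXiv:1402.0351 — 9 statements merged into one kernel-verified Lean document; each statement's English description precedes it below -/
import Mathlib

section
/- Let (Λ, μ) be a probability space, S a set, and A : S × Λ → {−1, 1}, B : S × Λ → {−1, 1} functions that are measurable in λ for each fixed setting. Define the correlation E(x, y) = ∫_Λ A(x, λ)·B(y, λ) dμ(λ). If E(b, b) = −1 for every b ∈ S (perfect anticorrelation at equal settings), then for all a, b, c ∈ S one has |E(a, b) − E(a, c)| ≤ 1 + E(b, c). -/
open MeasureTheory

/-- **Bell's original 1964 inequality.**
For a local deterministic model over a setting set `S` — a probability space `(Λ, μ)` with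
outcome functions `A B : S → Λ → {−1, 1}`, measurable in `λ` for each setting, and correlation
`E x y = ∫ A(x,λ)·B(y,λ) dμ(λ)` — if `E b b = −1` for every setting `b` (perfect anticorrelation
at equal settings), then `|E a b − E a c| ≤ 1 + E b c` for all settings `a`, `b`, `c`. -/
theorem bell_1964_inequality
    {Λ : Type*} [MeasurableSpace Λ] (μ : Measure Λ) [IsProbabilityMeasure μ]
    {S : Type*} (A B : S → Λ → ℝ)
    (hA : ∀ x l, A x l = 1 ∨ A x l = -1)
    (hB : ∀ y l, B y l = 1 ∨ B y l = -1)
    (hAm : ∀ x, Measurable (A x))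
    (hBm : ∀ y, Measurable (B y))
    (E : S → S → ℝ)
    (hE : ∀ x y, E x y = ∫ l, A x l * B y l ∂μ)
    (hanti : ∀ b, E b b = -1) :
    ∀ a b c, |E a b - E a c| ≤ 1 + E b c := by
  intro a b c
  -- integrability of products of ±1-valued measurable functions
  have key : ∀ (f g : Λ → ℝ), (∀ l, f l = 1 ∨ f l = -1) → Measurable f →
      (∀ l, g l = 1 ∨ g l = -1) → Measurable g →
      Integrable (fun l => f l * g l) μ := by
    intro f g hf hfm hg hgm
    refine (integrable_const (1 : ℝ)).mono' ((hfm.mul hgm).aestronglyMeasurable) ?_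
    filter_upwards with l
    rcases hf l with h | h <;> rcases hg l with h' | h' <;> simp [h, h']
  -- perfect anticorrelation gives A d * B d = -1 a.e.
  have hae : ∀ d, ∀ᵐ l ∂μ, A d l * B d l = -1 := by
    intro d
    have hint := key (A d) (B d) (hA d) (hAm d) (hB d) (hBm d)
    have h0 : ∫ l, (A d l * B d l + 1) ∂μ = 0 := by
      rw [integral_add hint (integrable_const 1)]
      have : ∫ l, A d l * B d l ∂μ = -1 := by rw [← hE d d]; exact hanti d
      simp [this]
    have hnn : 0 ≤ᵐ[μ] fun l => A d l * B d l + 1 := by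
      filter_upwards with l
      rcases hA d l with h | h <;> rcases hB d l with h' | h' <;> simp [h, h']
    have hz := (integral_eq_zero_iff_of_nonneg_ae hnn
      (hint.add (integrable_const 1))).mp h0
    filter_upwards [hz] with l hl
    have : A d l * B d l + 1 = 0 := hl
    linarith
  -- rewrite the difference as a single integral
  have hstep : E a b - E a c = ∫ l, A a l * B b l * (1 - B b l * B c l) ∂μ := by
    rw [hE a b, hE a c,
      ← integral_sub (key (A a) (B b) (hA a) (hAm a) (hB b) (hBm b))
        (key (A a) (B c) (hA a) (hAm a) (hB c) (hBm c))]
    congr 1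
    funext l
    rcases hB b l with h | h <;> simp [h] <;> ring
  have habs : |E a b - E a c| ≤ ∫ l, (1 - B b l * B c l) ∂μ := by
    rw [hstep]
    calc |∫ l, A a l * B b l * (1 - B b l * B c l) ∂μ|
        ≤ ∫ l, |A a l * B b l * (1 - B b l * B c l)| ∂μ := by
          simpa only [Real.norm_eq_abs] using
            norm_integral_le_integral_norm (fun l => A a l * B b l * (1 - B b l * B c l)) (μ := μ)
      _ = ∫ l, (1 - B b l * B c l) ∂μ := by
          congr 1
          funext l
          rcases hA a l with h | h <;> rcases hB b l with h' | h' <;>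
            rcases hB c l with h'' | h'' <;> simp [h, h', h''] <;> norm_num
  have hint_bc := key (B b) (B c) (hB b) (hBm b) (hB c) (hBm c)
  have hsplit : ∫ l, (1 - B b l * B c l) ∂μ = 1 - ∫ l, B b l * B c l ∂μ := by
    rw [integral_sub (integrable_const 1) hint_bc]
    simp
  -- ∫ B b * B c = - E b c, using B b = - A b a.e.
  have hbc : ∫ l, B b l * B c l ∂μ = - E b c := by
    have hcongr : (fun l => B b l * B c l) =ᵐ[μ] fun l => -(A b l * B c l) := by
      filter_upwards [hae b] with l hl
      rcases hA b l with h | h <;> rcases hB b l with h' | h' <;>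
        simp [h, h'] at hl ⊢ <;> linarith
    rw [integral_congr_ae hcongr, integral_neg, ← hE b c]
  rw [hsplit, hbc] at habs
  linarith
end

section
/- There do not exist a probability space (Λ, μ) and functions A : S² × Λ → {−1, 1}, B : S² × Λ → {−1, 1} (where S² denotes the set of unit vectors of ℝ³), measurable in λ for each setting, such that ∫_Λ A(a, λ)·B(b, λ) dμ(λ) = −⟨a, b⟩ for all unit vectors a, b ∈ ℝ³. That is, no local deterministic hidden-variable model reproduces the quantum singlet-state correlations E(a, b) = −⟨a, b⟩. -/
open MeasureTheory
open scoped RealInnerProductSpace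

noncomputable def bellVec (x y z : ℝ) : EuclideanSpace ℝ (Fin 3) :=
  (WithLp.equiv 2 (Fin 3 → ℝ)).symm ![x, y, z]

lemma bellVec_apply (x y z : ℝ) (i : Fin 3) : bellVec x y z i = ![x, y, z] i := rfl

lemma bellVec_inner (x y z x' y' z' : ℝ) :
    ⟪bellVec x y z, bellVec x' y' z'⟫ = x * x' + y * y' + z * z' := by
  simp [PiLp.inner_apply, RCLike.inner_apply, Fin.sum_univ_three, bellVec_apply, mul_comm]

lemma bellVec_norm (x y z : ℝ) : ‖bellVec x y z‖ = Real.sqrt (x^2 + y^2 + z^2) := by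
  rw [EuclideanSpace.norm_eq]
  simp [Fin.sum_univ_three, bellVec_apply, sq]

/-- **Bell's 1964 theorem.**
No local deterministic hidden-variable model reproduces the quantum singlet-state
correlations `E(a,b) = −⟨a,b⟩`: for every probability space `(Λ, μ)` and functions
`A B : S² × Λ → {−1, 1}` (where `S²` is the set of unit vectors of `ℝ³`), measurable in `λ`
for each setting, it is not the case that `∫ A(a,λ)·B(b,λ) dμ(λ) = −⟨a,b⟩` for all unit
vectors `a`, `b`. -/
theorem bell_1964_no_local_deterministic_model
    {Λ : Type*} [MeasurableSpace Λ] (μ : Measure Λ) [IsProbabilityMeasure μ]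
    (A B : {v : EuclideanSpace ℝ (Fin 3) // ‖v‖ = 1} → Λ → ℝ)
    (hA : ∀ x l, A x l = 1 ∨ A x l = -1)
    (hB : ∀ y l, B y l = 1 ∨ B y l = -1)
    (hAm : ∀ x, Measurable (A x))
    (hBm : ∀ y, Measurable (B y)) :
    ¬ ∀ (a b : {v : EuclideanSpace ℝ (Fin 3) // ‖v‖ = 1}),
        (∫ l, A a l * B b l ∂μ)
          = -⟪(a : EuclideanSpace ℝ (Fin 3)), (b : EuclideanSpace ℝ (Fin 3))⟫ := by
  intro h
  set s : ℝ := Real.sqrt 2 with hs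
  have hs2 : s ^ 2 = 2 := Real.sq_sqrt (by norm_num)
  have hspos : 0 < s := Real.sqrt_pos.mpr (by norm_num)
  have hs1 : 1 < s := by nlinarith
  have hinv2 : (1/s)^2 + (1/s)^2 + 0^2 = 1 := by
    field_simp
    nlinarith
  have hnorm1 : ‖bellVec 1 0 0‖ = 1 := by
    rw [bellVec_norm]; norm_num
  have hnorm2 : ‖bellVec 0 1 0‖ = 1 := by
    rw [bellVec_norm]; norm_num
  have hnormb : ‖bellVec (1/s) (1/s) 0‖ = 1 := by
    rw [bellVec_norm, hinv2, Real.sqrt_one]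
  have hnormb' : ‖bellVec (1/s) (-(1/s)) 0‖ = 1 := by
    rw [bellVec_norm]
    rw [show (1/s)^2 + (-(1/s))^2 + 0^2 = (1/s)^2 + (1/s)^2 + 0^2 by ring, hinv2,
      Real.sqrt_one]
  set a : {v : EuclideanSpace ℝ (Fin 3) // ‖v‖ = 1} := ⟨_, hnorm1⟩
  set a' : {v : EuclideanSpace ℝ (Fin 3) // ‖v‖ = 1} := ⟨_, hnorm2⟩
  set b : {v : EuclideanSpace ℝ (Fin 3) // ‖v‖ = 1} := ⟨_, hnormb⟩
  set b' : {v : EuclideanSpace ℝ (Fin 3) // ‖v‖ = 1} := ⟨_, hnormb'⟩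
  -- integrability
  have hint : ∀ x y, Integrable (fun l => A x l * B y l) μ := by
    intro x y
    refine ⟨((hAm x).mul (hBm y)).aestronglyMeasurable, ?_⟩
    apply HasFiniteIntegral.mono' (g := fun _ => (1:ℝ))
      (hasFiniteIntegral_const 1)
    filter_upwards with l
    rcases hA x l with h1 | h1 <;> rcases hB y l with h2 | h2 <;>
      simp [h1, h2]
  -- pointwise CHSH bound
  have hpt : ∀ l, -2 ≤ A a l * B b l + A a l * B b' l + A a' l * B b l
      - A a' l * B b' l := by
    intro l
    rcases hA a l with h1 | h1 <;> rcases hA a' l with h2 | h2 <;>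
      rcases hB b l with h3 | h3 <;> rcases hB b' l with h4 | h4 <;>
      rw [h1, h2, h3, h4] <;> norm_num
  -- integral CHSH bound
  have hsum : (-2 : ℝ) ≤ ∫ l, (A a l * B b l + A a l * B b' l + A a' l * B b l
      - A a' l * B b' l) ∂μ := by
    have := integral_mono (integrable_const (-2 : ℝ))
      (((((hint a b).add (hint a b')).add (hint a' b)).sub (hint a' b'))) hpt
    simpa using this
  have hsplit : (∫ l, (A a l * B b l + A a l * B b' l + A a' l * B b l
      - A a' l * B b' l) ∂μ)
      = (∫ l, A a l * B b l ∂μ) + (∫ l, A a l * B b' l ∂μ)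
        + (∫ l, A a' l * B b l ∂μ) - (∫ l, A a' l * B b' l ∂μ) := by
    have H1 : Integrable (fun l => A a l * B b l + A a l * B b' l + A a' l * B b l) μ :=
      ((hint a b).add (hint a b')).add (hint a' b)
    have H2 : Integrable (fun l => A a l * B b l + A a l * B b' l) μ :=
      (hint a b).add (hint a b')
    rw [integral_sub H1 (hint a' b'), integral_add H2 (hint a' b),
      integral_add (hint a b) (hint a b')]
  have e1 : (∫ l, A a l * B b l ∂μ) = -(1/s) := by
    rw [h a b]
    show -⟪bellVec 1 0 0, bellVec (1/s) (1/s) 0⟫ = _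
    rw [bellVec_inner]; ring
  have e2 : (∫ l, A a l * B b' l ∂μ) = -(1/s) := by
    rw [h a b']
    show -⟪bellVec 1 0 0, bellVec (1/s) (-(1/s)) 0⟫ = _
    rw [bellVec_inner]; ring
  have e3 : (∫ l, A a' l * B b l ∂μ) = -(1/s) := by
    rw [h a' b]
    show -⟪bellVec 0 1 0, bellVec (1/s) (1/s) 0⟫ = _
    rw [bellVec_inner]; ring
  have e4 : (∫ l, A a' l * B b' l ∂μ) = 1/s := by
    rw [h a' b']
    show -⟪bellVec 0 1 0, bellVec (1/s) (-(1/s)) 0⟫ = _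
    rw [bellVec_inner]; ring
  rw [hsplit, e1, e2, e3, e4] at hsum
  have hinv : 1 / s = s / 2 := by
    field_simp
    nlinarith
  rw [hinv] at hsum
  linarith
end

section
/- Let (Λ, μ) be a probability space and Ā : S_A × Λ → [−1, 1], B̄ : S_B × Λ → [−1, 1] be functions measurable in λ for each setting, and define E(a, b) = ∫_Λ Ā(a, λ)·B̄(b, λ) dμ(λ). Then for all a, a′ ∈ S_A and b, b′ ∈ S_B: |E(a, b) + E(a, b′) + E(a′, b) − E(a′, b′)| ≤ 2. -/
open MeasureTheory

/-- **The CHSH inequality** for correlations of Bell's 1971 form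
("indeterminism with a certain local character"): if `(Λ, μ)` is a probability space and
`Ā : S_A × Λ → [−1,1]`, `B̄ : S_B × Λ → [−1,1]` are measurable in `λ` for each setting, then
the correlations `E(a,b) = ∫ Ā(a,λ)·B̄(b,λ) dμ(λ)` satisfy
`|E(a,b) + E(a,b′) + E(a′,b) − E(a′,b′)| ≤ 2`. -/
theorem chsh_inequality
    {Λ : Type*} [MeasurableSpace Λ] (μ : Measure Λ) [IsProbabilityMeasure μ]
    {SA SB : Type*} (Abar : SA → Λ → ℝ) (Bbar : SB → Λ → ℝ)
    (hA : ∀ a l, |Abar a l| ≤ 1)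
    (hB : ∀ b l, |Bbar b l| ≤ 1)
    (hAm : ∀ a, Measurable (Abar a))
    (hBm : ∀ b, Measurable (Bbar b))
    (E : SA → SB → ℝ)
    (hE : ∀ a b, E a b = ∫ l, Abar a l * Bbar b l ∂μ) :
    ∀ a a' b b', |E a b + E a b' + E a' b - E a' b'| ≤ 2 := by
  intro a a' b b'
  have hint : ∀ (x : SA) (y : SB), Integrable (fun l => Abar x l * Bbar y l) μ := by
    intro x y
    apply Integrable.mono' (g := fun _ : Λ => (1 : ℝ))
    · exact integrable_const 1
    · exact ((hAm x).mul (hBm y)).aestronglyMeasurable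
    · filter_upwards with l
      rw [Real.norm_eq_abs, abs_mul]
      exact mul_le_one₀ (hA x l) (abs_nonneg _) (hB y l)
  have key : E a b + E a b' + E a' b - E a' b' =
      ∫ l, (Abar a l * Bbar b l + Abar a l * Bbar b' l
        + Abar a' l * Bbar b l - Abar a' l * Bbar b' l) ∂μ := by
    have h12 : Integrable (fun l => Abar a l * Bbar b l + Abar a l * Bbar b' l) μ :=
      (hint a b).add (hint a b')
    have h123 : Integrable (fun l => Abar a l * Bbar b l + Abar a l * Bbar b' l
        + Abar a' l * Bbar b l) μ := h12.add (hint a' b)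
    rw [hE, hE, hE, hE]
    rw [integral_sub h123 (hint a' b'), integral_add h12 (hint a' b),
      integral_add (hint a b) (hint a b')]
  rw [key]
  have hbound : ∀ l, |Abar a l * Bbar b l + Abar a l * Bbar b' l
      + Abar a' l * Bbar b l - Abar a' l * Bbar b' l| ≤ 2 := by
    intro l
    have h1 : Abar a l * Bbar b l + Abar a l * Bbar b' l
        + Abar a' l * Bbar b l - Abar a' l * Bbar b' l
        = Abar a l * (Bbar b l + Bbar b' l) + Abar a' l * (Bbar b l - Bbar b' l) := by ring
    rw [h1]
    calc |Abar a l * (Bbar b l + Bbar b' l) + Abar a' l * (Bbar b l - Bbar b' l)|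
        ≤ |Abar a l * (Bbar b l + Bbar b' l)| + |Abar a' l * (Bbar b l - Bbar b' l)| :=
          abs_add_le _ _
      _ ≤ 1 * |Bbar b l + Bbar b' l| + 1 * |Bbar b l - Bbar b' l| := by
          rw [abs_mul, abs_mul]
          gcongr <;> first | exact abs_nonneg _ | exact hA a l | exact hA a' l
      _ = |Bbar b l + Bbar b' l| + |Bbar b l - Bbar b' l| := by ring
      _ ≤ 2 := by
          have := abs_le.mp (hB b l)
          have := abs_le.mp (hB b' l)
          rcases abs_cases (Bbar b l + Bbar b' l) with ⟨h, _⟩ | ⟨h, _⟩ <;>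
            rcases abs_cases (Bbar b l - Bbar b' l) with ⟨h', _⟩ | ⟨h', _⟩ <;>
            rw [h, h'] <;> linarith
  calc |∫ l, (Abar a l * Bbar b l + Abar a l * Bbar b' l
        + Abar a' l * Bbar b l - Abar a' l * Bbar b' l) ∂μ|
      ≤ ∫ l, |Abar a l * Bbar b l + Abar a l * Bbar b' l
        + Abar a' l * Bbar b l - Abar a' l * Bbar b' l| ∂μ := by
        simpa using norm_integral_le_integral_norm (μ := μ) (fun l => Abar a l * Bbar b l + Abar a l * Bbar b' l + Abar a' l * Bbar b l - Abar a' l * Bbar b' l)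
    _ ≤ ∫ _l, (2 : ℝ) ∂μ := by
        apply integral_mono_of_nonneg
        · filter_upwards with l using abs_nonneg _
        · exact integrable_const 2
        · filter_upwards with l using hbound l
    _ = 2 := by simp
end

section
/- There exist unit vectors a, a′, b, b′ ∈ ℝ³ such that, for the singlet correlation function E(x, y) = −⟨x, y⟩, one has |E(a, b) + E(a, b′) + E(a′, b) − E(a′, b′)| = 2·√2. In particular the singlet correlations violate the CHSH bound of 2 satisfied by all factorizable models. -/
open scoped RealInnerProductSpace

/-- There exist unit vectors `a, a′, b, b′ ∈ ℝ³` for which the singlet correlation function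
`E(x,y) = −⟨x,y⟩` attains the CHSH value `|E(a,b) + E(a,b′) + E(a′,b) − E(a′,b′)| = 2√2`,
violating the CHSH bound of `2` satisfied by all factorizable models. -/
theorem singlet_violates_chsh :
    ∃ a a' b b' : EuclideanSpace ℝ (Fin 3),
      ‖a‖ = 1 ∧ ‖a'‖ = 1 ∧ ‖b‖ = 1 ∧ ‖b'‖ = 1 ∧
      |(-⟪a, b⟫) + (-⟪a, b'⟫) + (-⟪a', b⟫) - (-⟪a', b'⟫)| = 2 * Real.sqrt 2 := by
  have h2 : Real.sqrt 2 > 0 := by positivity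
  have hs : Real.sqrt 2 * Real.sqrt 2 = 2 := Real.mul_self_sqrt (by norm_num)
  refine ⟨(EuclideanSpace.equiv (Fin 3) ℝ).symm ![1,0,0],
          (EuclideanSpace.equiv (Fin 3) ℝ).symm ![0,1,0],
          (EuclideanSpace.equiv (Fin 3) ℝ).symm ![-(Real.sqrt 2)⁻¹, -(Real.sqrt 2)⁻¹, 0],
          (EuclideanSpace.equiv (Fin 3) ℝ).symm ![-(Real.sqrt 2)⁻¹, (Real.sqrt 2)⁻¹, 0],
          ?_, ?_, ?_, ?_, ?_⟩ <;>
    simp [EuclideanSpace.norm_eq, PiLp.inner_apply, Fin.sum_univ_three, RCLike.inner_apply,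
      abs_of_pos h2] <;>
    (first
      | (rw [abs_of_pos (by positivity)]; field_simp; nlinarith [hs])
      | norm_num)
end

section
/- A stochastic model is factorizable if and only if it is both local and Jarrett-complete. That is, there exist p(A|a,λ), q(B|b,λ) ∈ [0,1] with Σ_A p = Σ_B q = 1 and P(A,B|a,b,λ) = p(A|a,λ)·q(B|b,λ) for all A,B,a,b,λ, if and only if the marginal P(A|a,b,λ) = Σ_B P(A,B|a,b,λ) does not depend on b, the marginal P(B|a,b,λ) = Σ_A P(A,B|a,b,λ) does not depend on a, and P(A,B|a,b,λ) = P(A|a,b,λ)·P(B|a,b,λ) for all A,B,a,b,λ. -/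
/-- **Jarrett's 1984 theorem.** For a stochastic model with joint outcome distribution
`P(A,B|a,b,λ)` on outcomes `A, B ∈ {−1,1}` (nonnegative, summing to `1`), the model is
factorizable (Bell's local causality: `P(A,B|a,b,λ) = p(A|a,λ)·q(B|b,λ)` for some local
distributions `p`, `q`) if and only if it is both local (parameter independence: the marginal
`P(A|a,b,λ) = Σ_B P(A,B|a,b,λ)` does not depend on `b` and `P(B|a,b,λ) = Σ_A P(A,B|a,b,λ)`
does not depend on `a`) and Jarrett-complete (outcome independence:
`P(A,B|a,b,λ) = P(A|a,b,λ)·P(B|a,b,λ)`). -/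
theorem jarrett_theorem {Λ SA SB : Type*} (P : ℝ → ℝ → SA → SB → Λ → ℝ)
    (hP_nonneg : ∀ A B, (A = 1 ∨ A = -1) → (B = 1 ∨ B = -1) → ∀ a b l, 0 ≤ P A B a b l)
    (hP_sum : ∀ a b l,
      P 1 1 a b l + P 1 (-1) a b l + P (-1) 1 a b l + P (-1) (-1) a b l = 1) :
    (∃ (p : ℝ → SA → Λ → ℝ) (q : ℝ → SB → Λ → ℝ),
        (∀ A, (A = 1 ∨ A = -1) → ∀ a l, 0 ≤ p A a l ∧ p A a l ≤ 1) ∧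
        (∀ B, (B = 1 ∨ B = -1) → ∀ b l, 0 ≤ q B b l ∧ q B b l ≤ 1) ∧
        (∀ a l, p 1 a l + p (-1) a l = 1) ∧
        (∀ b l, q 1 b l + q (-1) b l = 1) ∧
        (∀ A B, (A = 1 ∨ A = -1) → (B = 1 ∨ B = -1) → ∀ a b l,
          P A B a b l = p A a l * q B b l))
    ↔ ((∀ A, (A = 1 ∨ A = -1) → ∀ a b b' l,
          P A 1 a b l + P A (-1) a b l = P A 1 a b' l + P A (-1) a b' l) ∧
       (∀ B, (B = 1 ∨ B = -1) → ∀ a a' b l,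
          P 1 B a b l + P (-1) B a b l = P 1 B a' b l + P (-1) B a' b l) ∧
       (∀ A B, (A = 1 ∨ A = -1) → (B = 1 ∨ B = -1) → ∀ a b l,
          P A B a b l
            = (P A 1 a b l + P A (-1) a b l) * (P 1 B a b l + P (-1) B a b l))) := by
  constructor
  · rintro ⟨p, q, hp, hq, hps, hqs, hfac⟩
    have margA : ∀ A, (A = 1 ∨ A = -1) → ∀ a b l,
        P A 1 a b l + P A (-1) a b l = p A a l := by
      intro A hA a b l
      rw [hfac A 1 hA (Or.inl rfl), hfac A (-1) hA (Or.inr rfl), ← mul_add, hqs, mul_one]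
    have margB : ∀ B, (B = 1 ∨ B = -1) → ∀ a b l,
        P 1 B a b l + P (-1) B a b l = q B b l := by
      intro B hB a b l
      rw [hfac 1 B (Or.inl rfl) hB, hfac (-1) B (Or.inr rfl) hB, ← add_mul, hps, one_mul]
    refine ⟨?_, ?_, ?_⟩
    · intro A hA a b b' l
      rw [margA A hA a b l, margA A hA a b' l]
    · intro B hB a a' b l
      rw [margB B hB a b l, margB B hB a' b l]
    · intro A B hA hB a b l
      rw [margA A hA a b l, margB B hB a b l, hfac A B hA hB]
  · rintro ⟨hlocA, hlocB, hoi⟩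
    by_cases hSA : Nonempty SA
    · by_cases hSB : Nonempty SB
      · obtain ⟨a₀⟩ := hSA
        obtain ⟨b₀⟩ := hSB
        refine ⟨fun A a l => P A 1 a b₀ l + P A (-1) a b₀ l,
                fun B b l => P 1 B a₀ b l + P (-1) B a₀ b l, ?_, ?_, ?_, ?_, ?_⟩
        · intro A hA a l
          dsimp only
          have h1 := hP_nonneg A 1 hA (Or.inl rfl) a b₀ l
          have h2 := hP_nonneg A (-1) hA (Or.inr rfl) a b₀ l
          constructor
          · linarith
          · rcases hA with rfl | rfl
            · have h3 := hP_nonneg (-1) 1 (Or.inr rfl) (Or.inl rfl) a b₀ l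
              have h4 := hP_nonneg (-1) (-1) (Or.inr rfl) (Or.inr rfl) a b₀ l
              have h5 := hP_sum a b₀ l
              linarith
            · have h3 := hP_nonneg 1 1 (Or.inl rfl) (Or.inl rfl) a b₀ l
              have h4 := hP_nonneg 1 (-1) (Or.inl rfl) (Or.inr rfl) a b₀ l
              have h5 := hP_sum a b₀ l
              linarith
        · intro B hB b l
          dsimp only
          have h1 := hP_nonneg 1 B (Or.inl rfl) hB a₀ b l
          have h2 := hP_nonneg (-1) B (Or.inr rfl) hB a₀ b l
          constructor
          · linarith
          · rcases hB with rfl | rfl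
            · have h3 := hP_nonneg 1 (-1) (Or.inl rfl) (Or.inr rfl) a₀ b l
              have h4 := hP_nonneg (-1) (-1) (Or.inr rfl) (Or.inr rfl) a₀ b l
              have h5 := hP_sum a₀ b l
              linarith
            · have h3 := hP_nonneg 1 1 (Or.inl rfl) (Or.inl rfl) a₀ b l
              have h4 := hP_nonneg (-1) 1 (Or.inr rfl) (Or.inl rfl) a₀ b l
              have h5 := hP_sum a₀ b l
              linarith
        · intro a l
          dsimp only
          have h5 := hP_sum a b₀ l
          linarith
        · intro b l
          dsimp only
          have h5 := hP_sum a₀ b l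
          linarith
        · intro A B hA hB a b l
          have e1 := hlocA A hA a b b₀ l
          have e2 := hlocB B hB a a₀ b l
          rw [hoi A B hA hB a b l, e1, e2]
      · exact ⟨fun A a l => 1/2, fun B b l => 1/2,
          fun A hA a l => by norm_num, fun B hB b l => by norm_num,
          fun a l => by norm_num, fun b l => by norm_num,
          fun A B hA hB a b l => (hSB ⟨b⟩).elim⟩
    · exact ⟨fun A a l => 1/2, fun B b l => 1/2,
        fun A hA a l => by norm_num, fun B hB b l => by norm_num,
        fun a l => by norm_num, fun b l => by norm_num,
        fun A B hA hB a b l => (hSA ⟨a⟩).elim⟩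
end

section
/- Let a stochastic model be factorizable with factors p(A|a,λ) and q(B|b,λ), and fix settings a ∈ S_A, b ∈ S_B. Suppose the predicted phenomenon is perfectly anticorrelated at (a,b), i.e., f(A,B|a,b) = 0 whenever A = B. Then for μ-almost every λ ∈ Λ: p(A|a,λ) ∈ {0,1} for both A ∈ {−1,1}, q(B|b,λ) ∈ {0,1} for both B ∈ {−1,1}, and p(A|a,λ) = q(−A|b,λ). In words: under local causality, perfect predictability of one outcome from the other entails determinism of the hidden-variable model at those settings. -/
open MeasureTheory

/-- **Under local causality, perfect predictability entails determinism.**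
Let a stochastic model be factorizable with factors `p(A|a,λ)` and `q(B|b,λ)` (so its
predicted phenomenon is `f(A,B|a,b) = ∫ p(A|a,λ)·q(B|b,λ) dμ(λ)`), and fix settings `a`, `b`.
If the phenomenon is perfectly anticorrelated at `(a,b)` — `f(A,B|a,b) = 0` whenever `A = B` —
then for `μ`-almost every `λ`: `p(A|a,λ) ∈ {0,1}` for both outcomes `A`,
`q(B|b,λ) ∈ {0,1}` for both outcomes `B`, and `p(A|a,λ) = q(−A|b,λ)`. -/
theorem perfect_anticorrelation_implies_determinism
    {Λ : Type*} [MeasurableSpace Λ] (μ : Measure Λ) [IsProbabilityMeasure μ]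
    {SA SB : Type*} (p : ℝ → SA → Λ → ℝ) (q : ℝ → SB → Λ → ℝ)
    (hp0 : ∀ A, (A = 1 ∨ A = -1) → ∀ a l, 0 ≤ p A a l)
    (hp1 : ∀ A, (A = 1 ∨ A = -1) → ∀ a l, p A a l ≤ 1)
    (hq0 : ∀ B, (B = 1 ∨ B = -1) → ∀ b l, 0 ≤ q B b l)
    (hq1 : ∀ B, (B = 1 ∨ B = -1) → ∀ b l, q B b l ≤ 1)
    (hp_sum : ∀ a l, p 1 a l + p (-1) a l = 1)
    (hq_sum : ∀ b l, q 1 b l + q (-1) b l = 1)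
    (hp_meas : ∀ A a, Measurable fun l => p A a l)
    (hq_meas : ∀ B b, Measurable fun l => q B b l)
    (a : SA) (b : SB)
    (hanti : ∀ A B, (A = 1 ∨ A = -1) → (B = 1 ∨ B = -1) → A = B →
      (∫ l, p A a l * q B b l ∂μ) = 0) :
    ∀ᵐ l ∂μ,
      (∀ A, (A = 1 ∨ A = -1) → (p A a l = 0 ∨ p A a l = 1)) ∧
      (∀ B, (B = 1 ∨ B = -1) → (q B b l = 0 ∨ q B b l = 1)) ∧
      (∀ A, (A = 1 ∨ A = -1) → p A a l = q (-A) b l) := by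
  have key : ∀ (A B : ℝ), (A = 1 ∨ A = -1) → (B = 1 ∨ B = -1) → A = B →
      ∀ᵐ l ∂μ, p A a l * q B b l = 0 := by
    intro A B hA hB hAB
    have h0 : ∀ l, 0 ≤ p A a l * q B b l := fun l =>
      mul_nonneg (hp0 A hA a l) (hq0 B hB b l)
    have h1 : ∀ l, p A a l * q B b l ≤ 1 := fun l =>
      mul_le_one₀ (hp1 A hA a l) (hq0 B hB b l) (hq1 B hB b l)
    have hm : Measurable fun l => p A a l * q B b l := (hp_meas A a).mul (hq_meas B b)
    have hint : Integrable (fun l => p A a l * q B b l) μ := by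
      apply Integrable.mono' (integrable_const (1:ℝ)) hm.aestronglyMeasurable
      filter_upwards with l
      rw [Real.norm_eq_abs, abs_of_nonneg (h0 l)]; exact h1 l
    exact (integral_eq_zero_iff_of_nonneg (fun l => h0 l) hint).mp (hanti A B hA hB hAB)
  filter_upwards [key 1 1 (Or.inl rfl) (Or.inl rfl) rfl,
    key (-1) (-1) (Or.inr rfl) (Or.inr rfl) rfl] with l h11 hmm
  have hps := hp_sum a l
  have hqs := hq_sum b l
  have hmm' : (1 - p 1 a l) * (1 - q 1 b l) = 0 := by
    have e1 : p (-1) a l = 1 - p 1 a l := by linarith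
    have e2 : q (-1) b l = 1 - q 1 b l := by linarith
    rw [e1, e2] at hmm; exact hmm
  have hsum : p 1 a l + q 1 b l = 1 := by nlinarith [hmm', h11]
  have hx : p 1 a l = 0 ∨ p 1 a l = 1 := by
    rcases mul_eq_zero.mp h11 with h | h
    · exact Or.inl h
    · right; linarith
  refine ⟨?_, ?_, ?_⟩
  · rintro A (rfl | rfl)
    · exact hx
    · rcases hx with h | h
      · right; linarith
      · left; linarith
  · rintro B (rfl | rfl)
    · rcases hx with h | h
      · right; linarith
      · left; linarith
    · rcases hx with h | h
      · left; linarith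
      · right; linarith
  · rintro A (rfl | rfl)
    · show p 1 a l = q (-1) b l; linarith
    · show p (-1) a l = q (-(-1)) b l
      rw [neg_neg]; linarith
end

section
/- A stochastic model satisfies Bell's local-causality conditions if and only if it is factorizable. Precisely: there exist functions p(A|a,λ), q(B|b,λ) ∈ [0,1] with Σ_A p(A|a,λ) = Σ_B q(B|b,λ) = 1 such that for all A, B, a, b, λ: (i) P(A|a,b,λ) > 0 implies P(A,B|a,b,λ) = P(A|a,b,λ)·q(B|b,λ), and (ii) P(B|a,b,λ) > 0 implies P(A,B|a,b,λ) = p(A|a,λ)·P(B|a,b,λ) — if and only if there exist such p, q with P(A,B|a,b,λ) = p(A|a,λ)·q(B|b,λ) for all A, B, a, b, λ. -/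
/-- **Bell's local-causality conditions are equivalent to factorizability.**
For a stochastic model `P(A,B|a,b,λ)` on outcomes `A, B ∈ {−1,1}` (nonnegative, summing
to `1`), with marginals `P(A|a,b,λ) = Σ_B P(A,B|a,b,λ)` and `P(B|a,b,λ) = Σ_A P(A,B|a,b,λ)`:
there exist `p(A|a,λ), q(B|b,λ) ∈ [0,1]` with `Σ_A p = Σ_B q = 1` such that
(i) `P(A|a,b,λ) > 0` implies `P(A,B|a,b,λ) = P(A|a,b,λ)·q(B|b,λ)` and
(ii) `P(B|a,b,λ) > 0` implies `P(A,B|a,b,λ) = p(A|a,λ)·P(B|a,b,λ)`,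
if and only if there exist such `p`, `q` with `P(A,B|a,b,λ) = p(A|a,λ)·q(B|b,λ)`. -/
theorem local_causality_iff_factorizable {Λ SA SB : Type*}
    (P : ℝ → ℝ → SA → SB → Λ → ℝ)
    (hP_nonneg : ∀ A B, (A = 1 ∨ A = -1) → (B = 1 ∨ B = -1) → ∀ a b l, 0 ≤ P A B a b l)
    (hP_sum : ∀ a b l,
      P 1 1 a b l + P 1 (-1) a b l + P (-1) 1 a b l + P (-1) (-1) a b l = 1) :
    (∃ (p : ℝ → SA → Λ → ℝ) (q : ℝ → SB → Λ → ℝ),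
        (∀ A, (A = 1 ∨ A = -1) → ∀ a l, 0 ≤ p A a l ∧ p A a l ≤ 1) ∧
        (∀ B, (B = 1 ∨ B = -1) → ∀ b l, 0 ≤ q B b l ∧ q B b l ≤ 1) ∧
        (∀ a l, p 1 a l + p (-1) a l = 1) ∧
        (∀ b l, q 1 b l + q (-1) b l = 1) ∧
        (∀ A B, (A = 1 ∨ A = -1) → (B = 1 ∨ B = -1) → ∀ a b l,
          (0 < P A 1 a b l + P A (-1) a b l →
            P A B a b l = (P A 1 a b l + P A (-1) a b l) * q B b l) ∧
          (0 < P 1 B a b l + P (-1) B a b l →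
            P A B a b l = p A a l * (P 1 B a b l + P (-1) B a b l))))
    ↔ (∃ (p : ℝ → SA → Λ → ℝ) (q : ℝ → SB → Λ → ℝ),
        (∀ A, (A = 1 ∨ A = -1) → ∀ a l, 0 ≤ p A a l ∧ p A a l ≤ 1) ∧
        (∀ B, (B = 1 ∨ B = -1) → ∀ b l, 0 ≤ q B b l ∧ q B b l ≤ 1) ∧
        (∀ a l, p 1 a l + p (-1) a l = 1) ∧
        (∀ b l, q 1 b l + q (-1) b l = 1) ∧
        (∀ A B, (A = 1 ∨ A = -1) → (B = 1 ∨ B = -1) → ∀ a b l,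
          P A B a b l = p A a l * q B b l)) := by
  constructor
  · rintro ⟨p, q, hp, hq, hps, hqs, hmain⟩
    refine ⟨p, q, hp, hq, hps, hqs, ?_⟩
    intro A B hA hB a b l
    have key1 : ∀ A' B', (A' = 1 ∨ A' = -1) → (B' = 1 ∨ B' = -1) →
        P A' B' a b l = (P A' 1 a b l + P A' (-1) a b l) * q B' b l := by
      intro A' B' hA' hB'
      rcases lt_or_ge 0 (P A' 1 a b l + P A' (-1) a b l) with h | h
      · exact (hmain A' B' hA' hB' a b l).1 h
      · have h1 := hP_nonneg A' 1 hA' (Or.inl rfl) a b l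
        have h2 := hP_nonneg A' (-1) hA' (Or.inr rfl) a b l
        have h3 := hP_nonneg A' B' hA' hB' a b l
        have hz : P A' B' a b l = 0 := by
          rcases hB' with rfl | rfl <;> linarith
        rw [hz]
        have hz2 : P A' 1 a b l + P A' (-1) a b l = 0 := by linarith
        rw [hz2, zero_mul]
    have key2 : ∀ B', (B' = 1 ∨ B' = -1) →
        P A B' a b l = p A a l * (P 1 B' a b l + P (-1) B' a b l) := by
      intro B' hB'
      rcases lt_or_ge 0 (P 1 B' a b l + P (-1) B' a b l) with h | h
      · exact (hmain A B' hA hB' a b l).2 h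
      · have h1 := hP_nonneg 1 B' (Or.inl rfl) hB' a b l
        have h2 := hP_nonneg (-1) B' (Or.inr rfl) hB' a b l
        have h3 := hP_nonneg A B' hA hB' a b l
        have hz : P A B' a b l = 0 := by
          rcases hA with rfl | rfl <;> linarith
        rw [hz]
        have hz2 : P 1 B' a b l + P (-1) B' a b l = 0 := by linarith
        rw [hz2, mul_zero]
    have hmA : P A 1 a b l + P A (-1) a b l = p A a l := by
      have e1 := key2 1 (Or.inl rfl)
      have e2 := key2 (-1) (Or.inr rfl)
      have hs := hP_sum a b l
      have : P A 1 a b l + P A (-1) a b l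
          = p A a l * (P 1 1 a b l + P 1 (-1) a b l + P (-1) 1 a b l + P (-1) (-1) a b l) := by
        rw [e1, e2]; ring
      rw [this, hs, mul_one]
    calc P A B a b l = (P A 1 a b l + P A (-1) a b l) * q B b l := key1 A B hA hB
      _ = p A a l * q B b l := by rw [hmA]
  · rintro ⟨p, q, hp, hq, hps, hqs, hfac⟩
    refine ⟨p, q, hp, hq, hps, hqs, ?_⟩
    intro A B hA hB a b l
    have e11 := hfac A 1 hA (Or.inl rfl) a b l
    have e12 := hfac A (-1) hA (Or.inr rfl) a b l
    have e21 := hfac 1 B (Or.inl rfl) hB a b l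
    have e22 := hfac (-1) B (Or.inr rfl) hB a b l
    have eAB := hfac A B hA hB a b l
    have hqsum := hqs b l
    have hpsum := hps a l
    constructor
    · intro _
      rw [eAB, e11, e12]
      linear_combination (-(p A a l * q B b l)) * hqsum
    · intro _
      rw [eAB, e21, e22]
      linear_combination (-(p A a l * q B b l)) * hpsum
end

section
/- Let a stochastic model be Jarrett-complete and fragilely local with witnessing function r(B|b,λ) for Bob's side. Fix a ∈ S_A, b ∈ S_B and outcomes A, B ∈ {−1,1}, and suppose f(A,B|a,b) = Σ_{B′} f(A,B′|a,b) (i.e., the phenomenon's conditional frequency of B given A at settings (a,b) equals 1). Then for μ-almost every λ with P(A|a,b,λ) > 0: P(B|a,b,λ) = 1 and r(B|b,λ) = 1. -/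
open MeasureTheory

/-- **Jarrett-completeness plus fragile locality yields determinacy from predictability.**
Let a stochastic model `P(A,B|a,b,λ)` (nonnegative, summing to `1`, measurable in `λ`) be
Jarrett-complete (`P(A,B|a,b,λ) = P(A|a,b,λ)·P(B|a,b,λ)`, with marginals
`P(A|a,b,λ) = Σ_B P(A,B|a,b,λ)` and `P(B|a,b,λ) = Σ_A P(A,B|a,b,λ)`) and fragilely local with
witnessing function `r(B|b,λ)` for Bob's side (and `s(A|a,λ)` for Alice's):
`P(B|a,b,λ) ∈ {0,1}` implies `P(B|a,b,λ) = r(B|b,λ)`, and similarly for `s`. Fix settings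
`a, b` and outcomes `A, B ∈ {−1,1}`, and suppose the predicted phenomenon
`f(A,B|a,b) = ∫ P(A,B|a,b,λ) dμ(λ)` satisfies `f(A,B|a,b) = Σ_{B′} f(A,B′|a,b)` (the
conditional frequency of `B` given `A` equals `1`). Then for `μ`-almost every `λ` with
`P(A|a,b,λ) > 0`: `P(B|a,b,λ) = 1` and `r(B|b,λ) = 1`. -/
theorem jc_fl_predictability_implies_determinacy
    {Λ : Type*} [MeasurableSpace Λ] (μ : Measure Λ) [IsProbabilityMeasure μ]
    {SA SB : Type*} (P : ℝ → ℝ → SA → SB → Λ → ℝ)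
    (hP_nonneg : ∀ A B, (A = 1 ∨ A = -1) → (B = 1 ∨ B = -1) → ∀ a b l, 0 ≤ P A B a b l)
    (hP_sum : ∀ a b l,
      P 1 1 a b l + P 1 (-1) a b l + P (-1) 1 a b l + P (-1) (-1) a b l = 1)
    (hP_meas : ∀ A B, (A = 1 ∨ A = -1) → (B = 1 ∨ B = -1) → ∀ a b,
      Measurable fun l => P A B a b l)
    (hJC : ∀ A B, (A = 1 ∨ A = -1) → (B = 1 ∨ B = -1) → ∀ a b l,
      P A B a b l
        = (P A 1 a b l + P A (-1) a b l) * (P 1 B a b l + P (-1) B a b l))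
    (r : ℝ → SB → Λ → ℝ) (s : ℝ → SA → Λ → ℝ)
    (hr : ∀ B, (B = 1 ∨ B = -1) → ∀ a b l,
      (P 1 B a b l + P (-1) B a b l = 0 ∨ P 1 B a b l + P (-1) B a b l = 1) →
        P 1 B a b l + P (-1) B a b l = r B b l)
    (hs : ∀ A, (A = 1 ∨ A = -1) → ∀ a b l,
      (P A 1 a b l + P A (-1) a b l = 0 ∨ P A 1 a b l + P A (-1) a b l = 1) →
        P A 1 a b l + P A (-1) a b l = s A a l)
    (a : SA) (b : SB) (A B : ℝ) (hA : A = 1 ∨ A = -1) (hB : B = 1 ∨ B = -1)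
    (hpred : (∫ l, P A B a b l ∂μ)
      = (∫ l, P A 1 a b l ∂μ) + (∫ l, P A (-1) a b l ∂μ)) :
    ∀ᵐ l ∂μ, 0 < P A 1 a b l + P A (-1) a b l →
      (P 1 B a b l + P (-1) B a b l = 1 ∧ r B b l = 1) := by
  have hint : ∀ A' B', (A' = 1 ∨ A' = -1) → (B' = 1 ∨ B' = -1) →
      Integrable (fun l => P A' B' a b l) μ := by
    intro A' B' hA' hB'
    refine (integrable_const (1 : ℝ)).mono'
      ((hP_meas A' B' hA' hB' a b).aestronglyMeasurable) ?_
    filter_upwards with l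
    have h11 := hP_nonneg 1 1 (Or.inl rfl) (Or.inl rfl) a b l
    have h12 := hP_nonneg 1 (-1) (Or.inl rfl) (Or.inr rfl) a b l
    have h21 := hP_nonneg (-1) 1 (Or.inr rfl) (Or.inl rfl) a b l
    have h22 := hP_nonneg (-1) (-1) (Or.inr rfl) (Or.inr rfl) a b l
    have hsum := hP_sum a b l
    rw [Real.norm_eq_abs, abs_of_nonneg (hP_nonneg A' B' hA' hB' a b l)]
    rcases hA' with h | h <;> rcases hB' with h' | h' <;> subst h <;> subst h' <;> linarith
  set g : Λ → ℝ := fun l => P A 1 a b l + P A (-1) a b l - P A B a b l with hg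
  have hgnn : ∀ l, 0 ≤ g l := by
    intro l
    have h1 := hP_nonneg A 1 hA (Or.inl rfl) a b l
    have h2 := hP_nonneg A (-1) hA (Or.inr rfl) a b l
    rcases hB with h | h <;> subst h <;> simp only [hg] <;> linarith
  have hgint : Integrable g μ :=
    ((hint A 1 hA (Or.inl rfl)).add (hint A (-1) hA (Or.inr rfl))).sub (hint A B hA hB)
  have hgzero : ∫ l, g l ∂μ = 0 := by
    have h := integral_sub ((hint A 1 hA (Or.inl rfl)).add (hint A (-1) hA (Or.inr rfl)))
      (hint A B hA hB)
    have h2 := integral_add (hint A 1 hA (Or.inl rfl)) (hint A (-1) hA (Or.inr rfl))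
    simp only [Pi.add_apply, Pi.sub_apply] at h h2
    simp only [hg]
    rw [h, h2]
    linarith
  have hae : g =ᵐ[μ] 0 := by
    rw [← integral_eq_zero_iff_of_nonneg hgnn hgint]
    exact hgzero
  filter_upwards [hae] with l hl hpos
  have hgl : P A 1 a b l + P A (-1) a b l = P A B a b l := by
    have : g l = 0 := hl
    simp only [hg] at this; linarith
  have hJCl := hJC A B hA hB a b l
  have hPAne : P A 1 a b l + P A (-1) a b l ≠ 0 := ne_of_gt hpos
  have hPB : P 1 B a b l + P (-1) B a b l = 1 := by
    have : (P A 1 a b l + P A (-1) a b l) * (P 1 B a b l + P (-1) B a b l)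
        = (P A 1 a b l + P A (-1) a b l) * 1 := by
      rw [mul_one, ← hJCl, hgl]
    exact (mul_left_cancel₀ hPAne this)
  exact ⟨hPB, by rw [← hr B hB a b l (Or.inr hPB), hPB]⟩
end

section
/- There is no stochastic model that is both deterministic and fragilely local whose predicted phenomenon equals the singlet phenomenon f_sing(A,B|a,b) = (1 − A·B·⟨a,b⟩)/4 over unit-vector settings a, b ∈ ℝ³. That is, quantum phenomena violate either fragile locality or determinism. -/
open MeasureTheory
open scoped RealInnerProductSpace

/-- **Bell's 1964 theorem in the form FL&D:
quantum phenomena violate either fragile locality or determinism.**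
No stochastic model `P(A,B|a,b,λ)` over unit-vector settings (summing to `1`, measurable
in `λ`) that is both deterministic (`P(A,B|a,b,λ) ∈ {0,1}`) and fragilely local (there are
functions `r(B|b,λ)` and `s(A|a,λ)`, measurable in `λ`, such that
`P(B|a,b,λ) ∈ {0,1}` implies `P(B|a,b,λ) = r(B|b,λ)` and `P(A|a,b,λ) ∈ {0,1}` implies
`P(A|a,b,λ) = s(A|a,λ)`, where `P(A|a,b,λ) = Σ_B P(A,B|a,b,λ)` and
`P(B|a,b,λ) = Σ_A P(A,B|a,b,λ)`) has predicted phenomenon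
`f(A,B|a,b) = ∫ P(A,B|a,b,λ) dμ(λ)` equal to the singlet phenomenon
`f_sing(A,B|a,b) = (1 − A·B·⟨a,b⟩)/4`. -/
theorem bell_1964_as_FL_and_D
    {Λ : Type*} [MeasurableSpace Λ] (μ : Measure Λ) [IsProbabilityMeasure μ]
    (P : ℝ → ℝ → {v : EuclideanSpace ℝ (Fin 3) // ‖v‖ = 1} →
      {v : EuclideanSpace ℝ (Fin 3) // ‖v‖ = 1} → Λ → ℝ)
    (hP_sum : ∀ a b l,
      P 1 1 a b l + P 1 (-1) a b l + P (-1) 1 a b l + P (-1) (-1) a b l = 1)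
    (hP_meas : ∀ A B, (A = 1 ∨ A = -1) → (B = 1 ∨ B = -1) → ∀ a b,
      Measurable fun l => P A B a b l)
    (hdet : ∀ A B, (A = 1 ∨ A = -1) → (B = 1 ∨ B = -1) → ∀ a b l,
      P A B a b l = 0 ∨ P A B a b l = 1)
    (r : ℝ → {v : EuclideanSpace ℝ (Fin 3) // ‖v‖ = 1} → Λ → ℝ)
    (s : ℝ → {v : EuclideanSpace ℝ (Fin 3) // ‖v‖ = 1} → Λ → ℝ)
    (hr_meas : ∀ B b, Measurable fun l => r B b l)
    (hs_meas : ∀ A a, Measurable fun l => s A a l)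
    (hr : ∀ B, (B = 1 ∨ B = -1) → ∀ a b l,
      (P 1 B a b l + P (-1) B a b l = 0 ∨ P 1 B a b l + P (-1) B a b l = 1) →
        P 1 B a b l + P (-1) B a b l = r B b l)
    (hs : ∀ A, (A = 1 ∨ A = -1) → ∀ a b l,
      (P A 1 a b l + P A (-1) a b l = 0 ∨ P A 1 a b l + P A (-1) a b l = 1) →
        P A 1 a b l + P A (-1) a b l = s A a l) :
    ¬ ∀ A B, (A = 1 ∨ A = -1) → (B = 1 ∨ B = -1) →
        ∀ (a b : {v : EuclideanSpace ℝ (Fin 3) // ‖v‖ = 1}),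
          (∫ l, P A B a b l ∂μ)
            = (1 - A * B * ⟪(a : EuclideanSpace ℝ (Fin 3)), (b : EuclideanSpace ℝ (Fin 3))⟫) / 4 := by
  intro hf
  -- exactly one of the four probabilities is 1
  have hcases : ∀ a b l,
      (P 1 1 a b l = 1 ∧ P 1 (-1) a b l = 0 ∧ P (-1) 1 a b l = 0 ∧ P (-1) (-1) a b l = 0) ∨
      (P 1 1 a b l = 0 ∧ P 1 (-1) a b l = 1 ∧ P (-1) 1 a b l = 0 ∧ P (-1) (-1) a b l = 0) ∨
      (P 1 1 a b l = 0 ∧ P 1 (-1) a b l = 0 ∧ P (-1) 1 a b l = 1 ∧ P (-1) (-1) a b l = 0) ∨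
      (P 1 1 a b l = 0 ∧ P 1 (-1) a b l = 0 ∧ P (-1) 1 a b l = 0 ∧ P (-1) (-1) a b l = 1) := by
    intro a b l
    have hsum := hP_sum a b l
    rcases hdet 1 1 (Or.inl rfl) (Or.inl rfl) a b l with h1|h1 <;>
    rcases hdet 1 (-1) (Or.inl rfl) (Or.inr rfl) a b l with h2|h2 <;>
    rcases hdet (-1) 1 (Or.inr rfl) (Or.inl rfl) a b l with h3|h3 <;>
    rcases hdet (-1) (-1) (Or.inr rfl) (Or.inr rfl) a b l with h4|h4 <;>
    rw [h1, h2, h3, h4] at hsum <;> norm_num at hsum <;> tauto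
  -- values of σ and ρ
  have hσval : ∀ a l, s 1 a l - s (-1) a l = 1 ∨ s 1 a l - s (-1) a l = -1 := by
    intro a l
    have h1 := hs 1 (Or.inl rfl) a a l
    have h2 := hs (-1) (Or.inr rfl) a a l
    rcases hcases a a l with ⟨e1,e2,e3,e4⟩|⟨e1,e2,e3,e4⟩|⟨e1,e2,e3,e4⟩|⟨e1,e2,e3,e4⟩ <;>
      simp only [e1, e2, e3, e4] at h1 h2 <;>
      rw [← h1 (by norm_num), ← h2 (by norm_num)] <;> norm_num
  have hρval : ∀ b l, r 1 b l - r (-1) b l = 1 ∨ r 1 b l - r (-1) b l = -1 := by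
    intro b l
    have h1 := hr 1 (Or.inl rfl) b b l
    have h2 := hr (-1) (Or.inr rfl) b b l
    rcases hcases b b l with ⟨e1,e2,e3,e4⟩|⟨e1,e2,e3,e4⟩|⟨e1,e2,e3,e4⟩|⟨e1,e2,e3,e4⟩ <;>
      simp only [e1, e2, e3, e4] at h1 h2 <;>
      rw [← h1 (by norm_num), ← h2 (by norm_num)] <;> norm_num
  -- pointwise product formula
  have hkey : ∀ a b l, (s 1 a l - s (-1) a l) * (r 1 b l - r (-1) b l)
      = P 1 1 a b l - P 1 (-1) a b l - P (-1) 1 a b l + P (-1) (-1) a b l := by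
    intro a b l
    have h1 := hs 1 (Or.inl rfl) a b l
    have h2 := hs (-1) (Or.inr rfl) a b l
    have h3 := hr 1 (Or.inl rfl) a b l
    have h4 := hr (-1) (Or.inr rfl) a b l
    rcases hcases a b l with ⟨e1,e2,e3,e4⟩|⟨e1,e2,e3,e4⟩|⟨e1,e2,e3,e4⟩|⟨e1,e2,e3,e4⟩ <;>
      simp only [e1, e2, e3, e4] <;>
      rw [← h1 (by simp [e1, e2]), ← h2 (by simp [e3, e4]),
        ← h3 (by simp [e1, e3]), ← h4 (by simp [e2, e4])] <;>
      simp only [e1, e2, e3, e4] <;> norm_num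
  -- integrability of the probabilities
  have hPint : ∀ (A B : ℝ), (A = 1 ∨ A = -1) → (B = 1 ∨ B = -1) → ∀ a b,
      Integrable (fun l => P A B a b l) μ := by
    intro A B hA hB a b
    refine (integrable_const (1:ℝ)).mono'
      ((hP_meas A B hA hB a b).aestronglyMeasurable) ?_
    filter_upwards with l
    rcases hdet A B hA hB a b l with h|h <;> rw [h] <;> norm_num
  have hσmeas : ∀ a, Measurable fun l => s 1 a l - s (-1) a l :=
    fun a => (hs_meas 1 a).sub (hs_meas (-1) a)
  have hρmeas : ∀ b, Measurable fun l => r 1 b l - r (-1) b l :=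
    fun b => (hr_meas 1 b).sub (hr_meas (-1) b)
  -- integrability of products of ±1-valued functions
  have hprodint : ∀ (f g : Λ → ℝ), Measurable f → Measurable g →
      (∀ l, f l = 1 ∨ f l = -1) → (∀ l, g l = 1 ∨ g l = -1) →
      Integrable (fun l => f l * g l) μ := by
    intro f g hfm hgm hfv hgv
    refine (integrable_const (1:ℝ)).mono' ((hfm.mul hgm).aestronglyMeasurable) ?_
    filter_upwards with l
    rcases hfv l with h|h <;> rcases hgv l with h'|h' <;> rw [h, h'] <;> norm_num
  -- the correlation
  have hcorr : ∀ a b, (∫ l, (s 1 a l - s (-1) a l) * (r 1 b l - r (-1) b l) ∂μ)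
      = -⟪(a : EuclideanSpace ℝ (Fin 3)), (b : EuclideanSpace ℝ (Fin 3))⟫ := by
    intro a b
    have hfun : (fun l => (s 1 a l - s (-1) a l) * (r 1 b l - r (-1) b l))
        = fun l => P 1 1 a b l - P 1 (-1) a b l - P (-1) 1 a b l + P (-1) (-1) a b l :=
      funext fun l => hkey a b l
    have i11 := hPint 1 1 (Or.inl rfl) (Or.inl rfl) a b
    have i1m := hPint 1 (-1) (Or.inl rfl) (Or.inr rfl) a b
    have im1 := hPint (-1) 1 (Or.inr rfl) (Or.inl rfl) a b
    have imm := hPint (-1) (-1) (Or.inr rfl) (Or.inr rfl) a b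
    have iB : Integrable (fun l => P 1 1 a b l - P 1 (-1) a b l) μ := i11.sub i1m
    have iA : Integrable (fun l => P 1 1 a b l - P 1 (-1) a b l - P (-1) 1 a b l) μ :=
      iB.sub im1
    rw [hfun, integral_add iA imm, integral_sub iB im1, integral_sub i11 i1m,
      hf 1 1 (Or.inl rfl) (Or.inl rfl) a b, hf 1 (-1) (Or.inl rfl) (Or.inr rfl) a b,
      hf (-1) 1 (Or.inr rfl) (Or.inl rfl) a b, hf (-1) (-1) (Or.inr rfl) (Or.inr rfl) a b]
    ring
  -- perfect anticorrelation: ρ = -σ a.e.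
  have hanti : ∀ a, (fun l => r 1 a l - r (-1) a l)
      =ᵐ[μ] fun l => -(s 1 a l - s (-1) a l) := by
    intro a
    have hpi : Integrable (fun l => (s 1 a l - s (-1) a l) * (r 1 a l - r (-1) a l)) μ :=
      hprodint _ _ (hσmeas a) (hρmeas a) (hσval a) (hρval a)
    have hint : Integrable
        (fun l => 1 + (s 1 a l - s (-1) a l) * (r 1 a l - r (-1) a l)) μ :=
      (integrable_const 1).add hpi
    have hinner : ⟪(a : EuclideanSpace ℝ (Fin 3)), (a : EuclideanSpace ℝ (Fin 3))⟫ = 1 := by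
      rw [real_inner_self_eq_norm_mul_norm, a.2]; norm_num
    have hzero : (∫ l, (1 + (s 1 a l - s (-1) a l) * (r 1 a l - r (-1) a l)) ∂μ) = 0 := by
      rw [integral_add (integrable_const 1) hpi, hcorr a a, hinner, integral_const]
      simp
    have hnonneg : (0 : Λ → ℝ) ≤
        fun l => 1 + (s 1 a l - s (-1) a l) * (r 1 a l - r (-1) a l) := by
      intro l
      rcases hσval a l with h|h <;> rcases hρval a l with h'|h' <;>
        simp only [Pi.zero_apply, h, h'] <;> norm_num
    have hae := (integral_eq_zero_iff_of_nonneg hnonneg hint).mp hzero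
    filter_upwards [hae] with l hl
    simp only [Pi.zero_apply] at hl
    rcases hσval a l with h|h <;> rcases hρval a l with h'|h' <;>
      rw [h, h'] <;> rw [h, h'] at hl <;> norm_num at hl <;> norm_num
  -- σ-σ correlation
  have hss : ∀ a b, (∫ l, (s 1 a l - s (-1) a l) * (s 1 b l - s (-1) b l) ∂μ)
      = ⟪(a : EuclideanSpace ℝ (Fin 3)), (b : EuclideanSpace ℝ (Fin 3))⟫ := by
    intro a b
    have hcongr : (fun l => (s 1 a l - s (-1) a l) * (s 1 b l - s (-1) b l))
        =ᵐ[μ] fun l => -((s 1 a l - s (-1) a l) * (r 1 b l - r (-1) b l)) := by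
      filter_upwards [hanti b] with l hl
      rw [hl]; ring
    rw [integral_congr_ae hcongr, integral_neg, hcorr a b, neg_neg]
  -- Bell's inequality
  have hpt : ∀ x y z : ℝ, (x = 1 ∨ x = -1) → (y = 1 ∨ y = -1) → (z = 1 ∨ z = -1) →
      x * y - x * z ≤ 1 - y * z := by
    rintro x y z (rfl|rfl) (rfl|rfl) (rfl|rfl) <;> norm_num
  have hbell : ∀ a b c : {v : EuclideanSpace ℝ (Fin 3) // ‖v‖ = 1},
      ⟪(a : EuclideanSpace ℝ (Fin 3)), (b : EuclideanSpace ℝ (Fin 3))⟫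
        - ⟪(a : EuclideanSpace ℝ (Fin 3)), (c : EuclideanSpace ℝ (Fin 3))⟫
      ≤ 1 - ⟪(b : EuclideanSpace ℝ (Fin 3)), (c : EuclideanSpace ℝ (Fin 3))⟫ := by
    intro a b c
    have pab : Integrable (fun l => (s 1 a l - s (-1) a l) * (s 1 b l - s (-1) b l)) μ :=
      hprodint _ _ (hσmeas a) (hσmeas b) (hσval a) (hσval b)
    have pac : Integrable (fun l => (s 1 a l - s (-1) a l) * (s 1 c l - s (-1) c l)) μ :=
      hprodint _ _ (hσmeas a) (hσmeas c) (hσval a) (hσval c)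
    have pbc : Integrable (fun l => (s 1 b l - s (-1) b l) * (s 1 c l - s (-1) c l)) μ :=
      hprodint _ _ (hσmeas b) (hσmeas c) (hσval b) (hσval c)
    have pabc : Integrable (fun l => (s 1 a l - s (-1) a l) * (s 1 b l - s (-1) b l)
        - (s 1 a l - s (-1) a l) * (s 1 c l - s (-1) c l)) μ := pab.sub pac
    have pone : Integrable (fun l => 1 - (s 1 b l - s (-1) b l) * (s 1 c l - s (-1) c l)) μ :=
      (integrable_const 1).sub pbc
    have h1 : (∫ l, ((s 1 a l - s (-1) a l) * (s 1 b l - s (-1) b l)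
          - (s 1 a l - s (-1) a l) * (s 1 c l - s (-1) c l)) ∂μ)
        ≤ ∫ l, (1 - (s 1 b l - s (-1) b l) * (s 1 c l - s (-1) c l)) ∂μ := by
      refine integral_mono pabc pone ?_
      intro l
      exact hpt _ _ _ (hσval a l) (hσval b l) (hσval c l)
    rw [integral_sub pab pac, integral_sub (integrable_const 1) pbc,
      hss a b, hss a c, hss b c, integral_const] at h1
    simpa using h1
  -- concrete vectors
  have hsq2 : Real.sqrt 2 ^ 2 = 2 := Real.sq_sqrt (by norm_num)
  have hpos : (0:ℝ) < Real.sqrt 2 := Real.sqrt_pos.mpr (by norm_num)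
  set e1 : EuclideanSpace ℝ (Fin 3) := EuclideanSpace.single 0 1 with he1def
  set e2 : EuclideanSpace ℝ (Fin 3) := EuclideanSpace.single 1 1 with he2def
  set v : EuclideanSpace ℝ (Fin 3) := (Real.sqrt 2)⁻¹ • (e1 + e2) with hvdef
  have hinv2 : ((Real.sqrt 2)⁻¹) ^ 2 = 1/2 := by
    rw [inv_pow, hsq2]; norm_num
  have he1n : ‖e1‖ = 1 := by simp [he1def]
  have he2n : ‖e2‖ = 1 := by simp [he2def]
  have hvn : ‖v‖ = 1 := by
    have hv0 : v 0 = (Real.sqrt 2)⁻¹ := by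
      simp [hvdef, he1def, he2def, EuclideanSpace.single_apply]
    have hv1 : v 1 = (Real.sqrt 2)⁻¹ := by
      simp [hvdef, he1def, he2def, EuclideanSpace.single_apply]
    have hv2 : v 2 = 0 := by
      simp [hvdef, he1def, he2def, EuclideanSpace.single_apply]
    rw [EuclideanSpace.norm_eq, Fin.sum_univ_three, hv0, hv1, hv2]
    rw [show ‖(Real.sqrt 2)⁻¹‖ ^ 2 + ‖(Real.sqrt 2)⁻¹‖ ^ 2 + ‖(0:ℝ)‖ ^ 2 = 1 by
      simp only [Real.norm_eq_abs, sq_abs]; rw [hinv2]; norm_num]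
    exact Real.sqrt_one
  have hi_e1v : ⟪e1, v⟫ = (Real.sqrt 2)⁻¹ := by
    simp [hvdef, he1def, he2def, real_inner_smul_right, inner_add_right,
      EuclideanSpace.inner_single_left, EuclideanSpace.single_apply]
  have hi_e1e2 : ⟪e1, e2⟫ = 0 := by
    simp [he1def, he2def, EuclideanSpace.inner_single_left, EuclideanSpace.single_apply]
  have hi_ve2 : ⟪v, e2⟫ = (Real.sqrt 2)⁻¹ := by
    simp [hvdef, he1def, he2def, real_inner_smul_left, inner_add_left,
      EuclideanSpace.inner_single_right, EuclideanSpace.single_apply]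
  have := hbell ⟨e1, he1n⟩ ⟨v, hvn⟩ ⟨e2, he2n⟩
  simp only [hi_e1v, hi_e1e2, hi_ve2] at this
  nlinarith [hinv2, hpos, inv_pos.mpr hpos, this]
end
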